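/- Fix integers n ≥ T ≥ 1 and a filter f : Fin T → ℝ. Define the autocorrelations c_i := Σ_{k=0}^{T−1−i} f_k · f_{k+i} for 0 ≤ i ≤ T−1 (so c₀ = Σ_{k=0}^{T−1} f_k² = ‖f‖₂²), and for j ∈ {0, 1, …, n−1} define q_j := c₀ + 2·Σ_{i=1}^{T−1} c_i · cos(2π·j·i/n). Let σ_1 ≥ σ_2 ≥ … ≥ σ_n be the values q_0, …, q_{n−1} listed in non-increasing order. Then for all indices j and p with 1 ≤ j and j + p ≤ n (p ≥ 0), σ_j − σ_{j+p} ≤ π · ‖f‖₂² · T² · (p + 1) / n. -/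

import Mathlib

open Finset Real

lemma cos_lip' (u v : ℝ) : |Real.cos u - Real.cos v| ≤ |u - v| := by
  rw [Real.cos_sub_cos]
  have h1 : |Real.sin ((u + v) / 2)| ≤ 1 := Real.abs_sin_le_one _
  have h2 : |Real.sin ((u - v) / 2)| ≤ |(u - v) / 2| := Real.abs_sin_le_abs
  have h3 : |(u - v) / 2| = |u - v| / 2 := by rw [abs_div]; norm_num
  calc |(-2) * Real.sin ((u + v) / 2) * Real.sin ((u - v) / 2)|
      = 2 * |Real.sin ((u + v) / 2)| * |Real.sin ((u - v) / 2)| := by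
        rw [abs_mul, abs_mul]; norm_num
    _ ≤ 2 * 1 * (|u - v| / 2) := by
        apply mul_le_mul _ (h3 ▸ h2) (abs_nonneg _) (by norm_num)
        nlinarith [abs_nonneg (Real.sin ((u + v) / 2))]
    _ = |u - v| := by ring

set_option maxHeartbeats 1000000 in
theorem conv_sq_singular_pair_gap (n T : ℕ) (hT : 1 ≤ T) (hn : T ≤ n) (f : Fin T → ℝ)
    (F : ℕ → ℝ) (hF : ∀ m (h : m < T), F m = f ⟨m, h⟩) (hF0 : ∀ m, T ≤ m → F m = 0)
    (c : ℕ → ℝ) (hc : ∀ i ≤ T - 1, c i = ∑ k ∈ Finset.range (T - i), F k * F (k + i))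
    (q : ℕ → ℝ)
    (hq : ∀ j, q j = c 0 + 2 * ∑ i ∈ Finset.Icc 1 (T - 1),
      c i * Real.cos (2 * π * j * i / n))
    (σ : Fin n → ℝ) (e : Fin n ≃ Fin n)
    (hσ : ∀ i : Fin n, σ i = q (e i)) (hsort : Antitone σ) :
    ∀ j p : ℕ, ∀ _hj1 : 1 ≤ j, ∀ _hjpn : j + p ≤ n,
      σ ⟨j - 1, by omega⟩ - σ ⟨j + p - 1, by omega⟩ ≤
        π * (∑ k, f k ^ 2) * (T : ℝ) ^ 2 * (p + 1) / n := by
  intro j p hj1 hjpn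
  have hn0 : 0 < n := lt_of_lt_of_le hT hn
  set c₀ : ℝ := ∑ k, f k ^ 2 with hc₀def
  have hFsq : ∑ k ∈ Finset.range T, F k ^ 2 = c₀ := by
    rw [hc₀def, ← Fin.sum_univ_eq_sum_range (fun k => F k ^ 2) T]
    exact Finset.sum_congr rfl fun k _ => by rw [hF k.1 k.2]
  have hc₀nonneg : 0 ≤ c₀ := by
    rw [← hFsq]; exact Finset.sum_nonneg fun k _ => sq_nonneg _
  have hc0 : c 0 = c₀ := by
    rw [hc 0 (Nat.zero_le _), ← hFsq]
    exact Finset.sum_congr (by norm_num) fun k _ => by rw [Nat.add_zero, ← sq]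
  -- |c i| ≤ c₀
  have hci : ∀ i, 1 ≤ i → i ≤ T - 1 → |c i| ≤ c₀ := by
    intro i _ hiT
    have key : (c i) ^ 2 ≤ c₀ * c₀ := by
      rw [hc i hiT]
      have h1 := Finset.sum_mul_sq_le_sq_mul_sq (Finset.range (T - i)) F (fun k => F (k + i))
      have h2 : ∑ k ∈ Finset.range (T - i), F k ^ 2 ≤ c₀ := by
        rw [← hFsq]
        exact Finset.sum_le_sum_of_subset_of_nonneg
          (Finset.range_subset_range.2 (Nat.sub_le _ _)) (fun k _ _ => sq_nonneg _)
      have h3 : ∑ k ∈ Finset.range (T - i), F (k + i) ^ 2 ≤ c₀ := by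
        have himg : ∑ m ∈ (Finset.range (T - i)).image (· + i), F m ^ 2
            = ∑ k ∈ Finset.range (T - i), F (k + i) ^ 2 :=
          Finset.sum_image (fun x _ y _ h => by omega)
        rw [← himg, ← hFsq]
        apply Finset.sum_le_sum_of_subset_of_nonneg _ (fun k _ _ => sq_nonneg _)
        intro m hm
        simp only [Finset.mem_image, Finset.mem_range] at hm ⊢
        obtain ⟨k, hk, rfl⟩ := hm
        omega
      have hs2 : 0 ≤ ∑ k ∈ Finset.range (T - i), F (k + i) ^ 2 :=
        Finset.sum_nonneg fun k _ => sq_nonneg _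
      calc (∑ k ∈ Finset.range (T - i), F k * F (k + i)) ^ 2
          ≤ (∑ k ∈ Finset.range (T - i), F k ^ 2) * ∑ k ∈ Finset.range (T - i), F (k + i) ^ 2 := h1
        _ ≤ c₀ * c₀ := by nlinarith
    cases abs_cases (c i) with
    | inl h => nlinarith [h.1]
    | inr h => nlinarith [h.1]
  -- symmetry
  have hsym : ∀ t, t ≤ n → q (n - t) = q t := by
    intro t ht
    rw [hq (n - t), hq t]
    congr 1
    congr 1
    apply Finset.sum_congr rfl
    intro i _
    congr 1
    have hcast : ((n - t : ℕ) : ℝ) = (n : ℝ) - t := by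
      rw [Nat.cast_sub ht]
    rw [hcast]
    have harg : 2 * π * ((n : ℝ) - t) * i / n = (i : ℝ) * (2 * π) - 2 * π * t * i / n := by
      field_simp
    rw [harg, Real.cos_nat_mul_two_pi_sub]
  -- Lipschitz bound on q
  have hlip : ∀ s t : ℕ, q s - q t ≤ 2 * π * c₀ * T * (T - 1) / n * |(s : ℝ) - t| := by
    intro s t
    have hdiff : q s - q t = 2 * ∑ i ∈ Finset.Icc 1 (T - 1),
        c i * (Real.cos (2 * π * s * i / n) - Real.cos (2 * π * t * i / n)) := by
      rw [hq s, hq t]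
      have hpt : ∀ i ∈ Finset.Icc 1 (T - 1),
          c i * (Real.cos (2 * π * s * i / n) - Real.cos (2 * π * t * i / n))
            = c i * Real.cos (2 * π * s * i / n) - c i * Real.cos (2 * π * t * i / n) :=
        fun i _ => by ring
      rw [Finset.sum_congr rfl hpt, Finset.sum_sub_distrib]
      ring
    rw [hdiff]
    have hterm : ∀ i ∈ Finset.Icc 1 (T - 1),
        c i * (Real.cos (2 * π * s * i / n) - Real.cos (2 * π * t * i / n))
          ≤ c₀ * (2 * π * i / n * |(s : ℝ) - t|) := by
      intro i hi
      rw [Finset.mem_Icc] at hi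
      have hcos : |Real.cos (2 * π * s * i / n) - Real.cos (2 * π * t * i / n)|
          ≤ 2 * π * i / n * |(s : ℝ) - t| := by
        have h := cos_lip' (2 * π * s * i / n) (2 * π * t * i / n)
        have heq : 2 * π * (s : ℝ) * i / n - 2 * π * t * i / n
            = (2 * π * i / n) * ((s : ℝ) - t) := by ring
        rw [heq, abs_mul] at h
        have : |2 * π * (i : ℝ) / n| = 2 * π * i / n := by
          rw [abs_of_nonneg]; positivity
        rwa [this] at h
      calc c i * (Real.cos (2 * π * s * i / n) - Real.cos (2 * π * t * i / n))
          ≤ |c i * (Real.cos (2 * π * s * i / n) - Real.cos (2 * π * t * i / n))| := le_abs_self _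
        _ = |c i| * |Real.cos (2 * π * s * i / n) - Real.cos (2 * π * t * i / n)| := abs_mul _ _
        _ ≤ c₀ * (2 * π * i / n * |(s : ℝ) - t|) := by
            apply mul_le_mul (hci i hi.1 hi.2) hcos (abs_nonneg _) hc₀nonneg
    have hsum : ∑ i ∈ Finset.Icc 1 (T - 1), (i : ℝ) = T * (T - 1) / 2 := by
      have hins : Finset.range T = insert 0 (Finset.Icc 1 (T - 1)) := by
        ext x
        simp only [Finset.mem_range, Finset.mem_insert, Finset.mem_Icc]
        omega
      have h1 : ∑ i ∈ Finset.range T, (i : ℝ) = ∑ i ∈ Finset.Icc 1 (T - 1), (i : ℝ) := by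
        rw [hins, Finset.sum_insert (by simp)]
        simp
      have hg := Finset.sum_range_id_mul_two T
      have hg2 : ((∑ i ∈ Finset.range T, i) : ℝ) * 2 = (T : ℝ) * ((T : ℝ) - 1) := by
        have : (((∑ i ∈ Finset.range T, i) * 2 : ℕ) : ℝ) = ((T * (T - 1) : ℕ) : ℝ) := by
          rw [hg]
        push_cast [Nat.cast_sub hT] at this
        linarith
      rw [← h1]
      push_cast
      linarith
    calc 2 * ∑ i ∈ Finset.Icc 1 (T - 1),
        c i * (Real.cos (2 * π * s * i / n) - Real.cos (2 * π * t * i / n))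
        ≤ 2 * ∑ i ∈ Finset.Icc 1 (T - 1), c₀ * (2 * π * i / n * |(s : ℝ) - t|) := by
          have := Finset.sum_le_sum hterm
          linarith
      _ = 2 * (c₀ * (2 * π / n * |(s : ℝ) - t|)) * ∑ i ∈ Finset.Icc 1 (T - 1), (i : ℝ) := by
          rw [Finset.mul_sum, Finset.mul_sum]
          exact Finset.sum_congr rfl fun i _ => by ring
      _ = 2 * π * c₀ * T * (T - 1) / n * |(s : ℝ) - t| := by
          rw [hsum]
          field_simp
  -- main combinatorial argument
  set a' : ℝ := σ ⟨j - 1, by omega⟩ with ha'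
  set b' : ℝ := σ ⟨j + p - 1, by omega⟩ with hb'
  by_cases hab : a' ≤ b'
  · have hRHS : 0 ≤ π * c₀ * (T : ℝ) ^ 2 * ((p : ℝ) + 1) / n := by positivity
    linarith
  push_neg at hab
  have hp1 : 1 ≤ p := by
    by_contra hp0
    have hp0' : p = 0 := by omega
    subst hp0'
    have : b' = a' := by
      rw [hb', ha']
      exact congrArg σ (Fin.ext (show j + 0 - 1 = j - 1 by omega))
    exact absurd this (ne_of_lt hab)
  -- counting: few indices have q strictly between b' and a'
  set X := (Finset.range n).filter (fun i => b' < q i ∧ q i < a') with hX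
  have hXcard : X.card ≤ p - 1 := by
    have hmaps : ∀ i ∈ X, (e.symm ⟨i % n, Nat.mod_lt _ hn0⟩).val ∈ Finset.Ico j (j + p - 1) := by
      intro i hi
      rw [hX, Finset.mem_filter, Finset.mem_range] at hi
      obtain ⟨hin, hbi, hia⟩ := hi
      have hmod : i % n = i := Nat.mod_eq_of_lt hin
      set k : Fin n := e.symm ⟨i % n, Nat.mod_lt _ hn0⟩ with hk
      have hσk : σ k = q i := by
        rw [hσ k, hk, Equiv.apply_symm_apply]
        simp [hmod]
      rw [Finset.mem_Ico]
      constructor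
      · by_contra hlt
        push_neg at hlt
        have hle : k ≤ (⟨j - 1, by omega⟩ : Fin n) := by
          rw [Fin.le_def]
          simp
          omega
        have := hsort hle
        rw [hσk, ← ha'] at this
        linarith
      · by_contra hge
        push_neg at hge
        have hle : (⟨j + p - 1, by omega⟩ : Fin n) ≤ k := by
          rw [Fin.le_def]
          simp
          omega
        have := hsort hle
        rw [hσk, ← hb'] at this
        linarith
    have hinj : Set.InjOn (fun i => (e.symm ⟨i % n, Nat.mod_lt _ hn0⟩).val) ↑X := by
      intro i1 h1 i2 h2 heq
      rw [hX, Finset.coe_filter] at h1 h2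
      simp only [Finset.mem_range] at h1 h2
      have hm1 : i1 % n = i1 := Nat.mod_eq_of_lt h1.1
      have hm2 : i2 % n = i2 := Nat.mod_eq_of_lt h2.1
      simp only at heq
      have : (⟨i1 % n, Nat.mod_lt _ hn0⟩ : Fin n) = ⟨i2 % n, Nat.mod_lt _ hn0⟩ :=
        e.symm.injective (Fin.ext heq)
      have := Fin.mk_eq_mk.mp this
      omega
    have := Finset.card_le_card_of_injOn _ hmaps hinj
    rwa [Nat.card_Ico, show j + p - 1 - j = p - 1 by omega] at this
  -- folding
  set M := n / 2 with hM
  have hfold : ∀ i : Fin n, ∃ t, t ≤ M ∧ q t = q i.val := by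
    intro i
    by_cases h : i.val ≤ M
    · exact ⟨i.val, h, rfl⟩
    · push_neg at h
      have hi2 := i.2
      exact ⟨n - i.val, by omega, hsym i.val (le_of_lt i.2)⟩
  -- the top and bottom witnesses
  set P := ((Finset.range (M + 1)) ×ˢ (Finset.range (M + 1))).filter
    (fun z => a' ≤ q z.1 ∧ q z.2 ≤ b') with hP
  have hPne : P.Nonempty := by
    obtain ⟨ta, hta, hqa⟩ := hfold (e ⟨j - 1, by omega⟩)
    obtain ⟨tb, htb, hqb⟩ := hfold (e ⟨j + p - 1, by omega⟩)
    refine ⟨(ta, tb), ?_⟩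
    rw [hP, Finset.mem_filter, Finset.mem_product, Finset.mem_range, Finset.mem_range]
    refine ⟨⟨by omega, by omega⟩, ?_, ?_⟩
    · rw [hqa, ← hσ, ← ha']
    · rw [hqb, ← hσ, ← hb']
  obtain ⟨⟨a, b⟩, habP, hmin⟩ := Finset.exists_min_image P
    (fun z => max z.1 z.2 - min z.1 z.2) hPne
  rw [hP, Finset.mem_filter, Finset.mem_product, Finset.mem_range, Finset.mem_range] at habP
  obtain ⟨⟨haM, hbM⟩, hqa', hqb'⟩ := habP
  simp only at hqa' hqb'
  have hane : a ≠ b := by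
    intro h
    rw [h] at hqa'
    linarith
  set u := min a b with hu
  set v := max a b with hv
  have huv : u < v := by omega
  have hvM : v ≤ M := by omega
  -- points strictly between u and v have q strictly between b' and a'
  have hbetween : ∀ t, u < t → t < v → b' < q t ∧ q t < a' := by
    intro t h1 h2
    have htM : t < M + 1 := by omega
    constructor
    · by_contra h
      push_neg at h
      have hmem : (a, t) ∈ P := by
        rw [hP, Finset.mem_filter, Finset.mem_product, Finset.mem_range, Finset.mem_range]
        exact ⟨⟨by omega, htM⟩, hqa', h⟩
      have := hmin (a, t) hmem
      simp only at this
      omega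
    · by_contra h
      push_neg at h
      have hmem : (t, b) ∈ P := by
        rw [hP, Finset.mem_filter, Finset.mem_product, Finset.mem_range, Finset.mem_range]
        exact ⟨⟨htM, by omega⟩, h, hqb'⟩
      have := hmin (t, b) hmem
      simp only at this
      omega
  -- double counting via the fold
  have hsubX : (Finset.Ioo u v).biUnion (fun t => {t, n - t}) ⊆ X := by
    intro x hx
    rw [Finset.mem_biUnion] at hx
    obtain ⟨t, ht, hxt⟩ := hx
    rw [Finset.mem_Ioo] at ht
    obtain ⟨hq1, hq2⟩ := hbetween t ht.1 ht.2
    have ht1 : 1 ≤ t := by omega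
    have ht2 : 2 * t < n := by omega
    rw [Finset.mem_insert, Finset.mem_singleton] at hxt
    rw [hX, Finset.mem_filter, Finset.mem_range]
    rcases hxt with rfl | rfl
    · exact ⟨by omega, hq1, hq2⟩
    · rw [hsym t (by omega)]
      exact ⟨by omega, hq1, hq2⟩
  have hdisj : ∀ t1 ∈ Finset.Ioo u v, ∀ t2 ∈ Finset.Ioo u v, t1 ≠ t2 →
      Disjoint ({t1, n - t1} : Finset ℕ) {t2, n - t2} := by
    intro t1 h1 t2 h2 hne
    rw [Finset.mem_Ioo] at h1 h2
    rw [Finset.disjoint_left]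
    intro x hx1 hx2
    rw [Finset.mem_insert, Finset.mem_singleton] at hx1 hx2
    omega
  have hcard2 : ((Finset.Ioo u v).biUnion (fun t => {t, n - t})).card
      = 2 * (Finset.Ioo u v).card := by
    rw [Finset.card_biUnion hdisj]
    have hpair : ∀ t ∈ Finset.Ioo u v, ({t, n - t} : Finset ℕ).card = 2 := by
      intro t ht
      rw [Finset.mem_Ioo] at ht
      rw [Finset.card_insert_of_notMem, Finset.card_singleton]
      rw [Finset.mem_singleton]
      omega
    rw [Finset.sum_congr rfl hpair, Finset.sum_const, smul_eq_mul, mul_comm]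
  have hkey : 2 * (v - u) ≤ p + 1 := by
    have h1 : 2 * (Finset.Ioo u v).card ≤ X.card := by
      rw [← hcard2]
      exact Finset.card_le_card hsubX
    rw [Nat.card_Ioo] at h1
    omega
  -- final estimate
  have hstep1 : a' - b' ≤ 2 * π * c₀ * T * ((T : ℝ) - 1) / n * |(a : ℝ) - b| := by
    have := hlip a b
    linarith
  have habsD : |(a : ℝ) - b| = ((v - u : ℕ) : ℝ) := by
    rw [Nat.cast_sub (by omega : u ≤ v)]
    rcases le_total a b with h | h
    · have hu1 : u = a := by omega
      have hv1 : v = b := by omega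
      rw [hu1, hv1, abs_of_nonpos (by
        have : (a : ℝ) ≤ b := Nat.cast_le.mpr h
        linarith)]
      ring
    · have hu1 : u = b := by omega
      have hv1 : v = a := by omega
      rw [hu1, hv1, abs_of_nonneg (by
        have : (b : ℝ) ≤ a := Nat.cast_le.mpr h
        linarith)]
  have hDle : ((v - u : ℕ) : ℝ) ≤ ((p : ℝ) + 1) / 2 := by
    have : ((2 * (v - u) : ℕ) : ℝ) ≤ ((p + 1 : ℕ) : ℝ) := Nat.cast_le.mpr hkey
    push_cast at this
    linarith
  have hT1 : (1 : ℝ) ≤ T := by exact_mod_cast hT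
  have hL : 0 ≤ 2 * π * c₀ * T * ((T : ℝ) - 1) / n := by
    have hπ := Real.pi_pos
    have hn' : (0 : ℝ) < n := by exact_mod_cast hn0
    have h1 : 0 ≤ 2 * π * c₀ * T * ((T : ℝ) - 1) := by
      apply mul_nonneg
      · positivity
      · linarith
    positivity
  have hstep2 : a' - b' ≤ 2 * π * c₀ * T * ((T : ℝ) - 1) / n * (((p : ℝ) + 1) / 2) := by
    calc a' - b' ≤ 2 * π * c₀ * T * ((T : ℝ) - 1) / n * |(a : ℝ) - b| := hstep1
      _ ≤ 2 * π * c₀ * T * ((T : ℝ) - 1) / n * (((p : ℝ) + 1) / 2) := by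
          apply mul_le_mul_of_nonneg_left _ hL
          rw [habsD]
          exact hDle
  calc a' - b' ≤ 2 * π * c₀ * T * ((T : ℝ) - 1) / n * (((p : ℝ) + 1) / 2) := hstep2
    _ = π * c₀ * ((T : ℝ) * ((T : ℝ) - 1)) * ((p : ℝ) + 1) / n := by ring
    _ ≤ π * c₀ * (T : ℝ) ^ 2 * ((p : ℝ) + 1) / n := by
        have hn' : (0 : ℝ) < n := by exact_mod_cast hn0
        have hA : 0 ≤ π * c₀ := mul_nonneg Real.pi_pos.le hc₀nonneg
        have hp' : (0 : ℝ) ≤ (p : ℝ) + 1 := by positivity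
        have h2 : (T : ℝ) * ((T : ℝ) - 1) ≤ (T : ℝ) ^ 2 := by nlinarith
        apply (div_le_div_iff_of_pos_right hn').mpr
        exact mul_le_mul_of_nonneg_right (mul_le_mul_of_nonneg_left h2 hA) hp'
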